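/- Let f be a polynomial with deg f ≤ t, B ⊆ ℝⁿ compact with nonempty interior, μ a finite Borel measure with supp(μ)=B, and (T_α)_{|α|≤t} orthonormal polynomials in L²(B,μ) spanning ℝ[x]_t. Then the minimum f* of f on B equals the infimum of ∫_B f(y) σ(y) dμ(y) over all polynomials σ(x) = Σ_{|α|≤t} σ_α T_α(x) whose coefficients satisfy σ_α = ∫_B T_α dφ for some Borel probability measure φ on B. -/

import Mathlib

open MeasureTheory MvPolynomial

/-- The minimum f* of f on B equals the infimum of ∫_B f σ dμ over all signed
polynomial densities σ = Σ_α σ_α T_α whose coefficients σ_α = ∫_B T_α dφ are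
moments of some Borel probability measure φ on B. -/
theorem stmt3 {n t : ℕ} (B : Set (Fin n → ℝ)) (hBc : IsCompact B)
    (hBint : (interior B).Nonempty)
    (μ : Measure (Fin n → ℝ)) [IsFiniteMeasure μ] (hsupp : μ Bᶜ = 0)
    (hpos : ∀ U : Set (Fin n → ℝ), IsOpen U → (U ∩ B).Nonempty → 0 < μ U)
    {ι : Type*} [Fintype ι] [DecidableEq ι] (T : ι → MvPolynomial (Fin n) ℝ)
    (hdeg : ∀ i, (T i).totalDegree ≤ t)
    (horth : ∀ i j, ∫ x in B, eval x (T i) * eval x (T j) ∂μ = if i = j then 1 else 0)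
    (hspan : ∀ q : MvPolynomial (Fin n) ℝ, q.totalDegree ≤ t →
      q ∈ Submodule.span ℝ (Set.range T))
    (f : MvPolynomial (Fin n) ℝ) (hf : f.totalDegree ≤ t)
    (fstar : ℝ) (hm : IsLeast ((fun x => eval x f) '' B) fstar) :
    IsGLB {r : ℝ | ∃ φ : Measure (Fin n → ℝ), IsProbabilityMeasure φ ∧ φ Bᶜ = 0 ∧
      r = ∫ y in B, eval y f * (∑ i, (∫ z in B, eval z (T i) ∂φ) * eval y (T i)) ∂μ}
      fstar := by
  classical
  have hBm : MeasurableSet B := hBc.isClosed.measurableSet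
  -- get coefficients c with ∑ c i • T i = f
  obtain ⟨c, hc⟩ := (Finsupp.mem_span_range_iff_exists_finsupp).1 (hspan f hf)
  -- evaluate f
  have hev : ∀ x, eval x f = ∑ i, (c i) * eval x (T i) := by
    intro x
    rw [← hc]
    rw [map_finsuppSum]
    rw [Finsupp.sum_fintype]
    · congr 1; ext i; simp [smul_eq_mul]
    · intro i; simp
  -- integrability helpers
  have hint : ∀ (g : (Fin n → ℝ) → ℝ) (ν : Measure (Fin n → ℝ)) [IsFiniteMeasure ν],
      Continuous g → IntegrableOn g B ν := by
    intro g ν _ hg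
    exact hg.continuousOn.integrableOn_compact hBc
  have hcontT : ∀ i, Continuous (fun x => eval x (T i)) := fun i =>
    (T i).continuous_eval
  have hcontf : Continuous (fun x => eval x f) := f.continuous_eval
  -- key: ∫ f T_i dμ = c i
  have hcoef : ∀ i, ∫ x in B, eval x f * eval x (T i) ∂μ = c i := by
    intro i
    have : ∀ x, eval x f * eval x (T i)
        = ∑ j, c j * (eval x (T j) * eval x (T i)) := by
      intro x
      rw [hev x, Finset.sum_mul]
      congr 1; ext j; ring
    rw [setIntegral_congr_fun hBm (fun x _ => this x)]
    rw [integral_finset_sum]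
    · have : ∀ j ∈ Finset.univ, (∫ x in B, c j * (eval x (T j) * eval x (T i)) ∂μ)
          = if j = i then c j else 0 := by
        intro j _
        rw [integral_const_mul, horth j i]
        split_ifs <;> simp
      rw [Finset.sum_congr rfl this]
      simp
    · intro j _
      exact (hint _ μ (by continuity)).const_mul _
  -- main computation: value for a measure φ
  have hval : ∀ (φ : Measure (Fin n → ℝ)) [IsProbabilityMeasure φ],
      (∫ y in B, eval y f * (∑ i, (∫ z in B, eval z (T i) ∂φ) * eval y (T i)) ∂μ)
        = ∫ y in B, eval y f ∂φ := by
    intro φ _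
    have step1 : (∫ y in B, eval y f * (∑ i, (∫ z in B, eval z (T i) ∂φ) * eval y (T i)) ∂μ)
        = ∑ i, (∫ z in B, eval z (T i) ∂φ) * (∫ y in B, eval y f * eval y (T i) ∂μ) := by
      have : ∀ y, eval y f * (∑ i, (∫ z in B, eval z (T i) ∂φ) * eval y (T i))
          = ∑ i, (∫ z in B, eval z (T i) ∂φ) * (eval y f * eval y (T i)) := by
        intro y
        rw [Finset.mul_sum]
        congr 1; ext i; ring
      rw [setIntegral_congr_fun hBm (fun y _ => this y)]
      rw [integral_finset_sum]
      · congr 1; ext i; rw [integral_const_mul]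
      · intro i _
        exact (hint _ μ (hcontf.mul (hcontT i))).const_mul _
    rw [step1]
    have step2 : ∀ i, (∫ z in B, eval z (T i) ∂φ) * (∫ y in B, eval y f * eval y (T i) ∂μ)
        = c i * ∫ z in B, eval z (T i) ∂φ := by
      intro i; rw [hcoef i]; ring
    rw [Finset.sum_congr rfl (fun i _ => step2 i)]
    have : (∫ y in B, eval y f ∂φ) = ∫ y in B, (∑ i, c i * eval y (T i)) ∂φ :=
      setIntegral_congr_fun hBm (fun y _ => hev y)
    rw [this, integral_finset_sum]
    · congr 1; ext i; rw [integral_const_mul]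
    · intro i _
      exact (hint _ φ (hcontT i)).const_mul _
  obtain ⟨x₀, hx₀B, hx₀⟩ := hm.1
  constructor
  · -- fstar is a lower bound
    rintro r ⟨φ, hφp, hφB, rfl⟩
    rw [hval φ]
    have hφBfull : φ B = 1 := by
      have h1 : φ Set.univ = 1 := hφp.measure_univ
      have : φ Set.univ ≤ φ B + φ Bᶜ := by
        rw [← Set.union_compl_self B]; exact measure_union_le _ _
      rw [hφB, add_zero] at this
      exact le_antisymm (by simpa using measure_mono (μ := φ) (Set.subset_univ B)) (h1 ▸ this)
    have : (∫ y in B, fstar ∂φ) ≤ ∫ y in B, eval y f ∂φ := by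
      apply setIntegral_mono_on
      · exact integrableOn_const (by rw [hφBfull]; exact ENNReal.one_ne_top)
      · exact hint _ φ hcontf
      · exact hBm
      · intro x hx
        exact hm.2 ⟨x, hx, rfl⟩
    calc fstar = ∫ y in B, fstar ∂φ := by
          rw [setIntegral_const, measureReal_def, hφBfull]; simp
      _ ≤ _ := this
  · -- fstar is the greatest lower bound: it's attained via a Dirac measure
    intro b hb
    apply hb
    refine ⟨Measure.dirac x₀, inferInstance, ?_, ?_⟩
    · rw [Measure.dirac_apply' _ hBm.compl]
      simp [hx₀B]
    · rw [hval (Measure.dirac x₀)]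
      rw [setIntegral_dirac _ x₀ B]
      simp [hx₀B, hx₀]
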